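/- (Main theorem, part (iii): absence of eigenvalues on the wrong side of the continuum.) Let d ≥ 1 and K ∈ T^d. If μ < 0, then for every symmetric f ∈ L²(T^d × T^d) one has ⟨H_μ(K)f, f⟩ ≤ E_max(K)·‖f‖², and consequently H_μ(K) has no eigenvalue z > E_max(K) with a symmetric eigenfunction. If μ > 0, then ⟨H_μ(K)f, f⟩ ≥ E_min(K)·‖f‖² for every symmetric f, and consequently H_μ(K) has no eigenvalue z < E_min(K) with a symmetric eigenfunction. -/

import Mathlib

open MeasureTheory Real Filter
open scoped RealInnerProductSpace

noncomputable section

instance fact_two_pi_pos : Fact (0 < 2 * Real.pi) := ⟨by positivity⟩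

/-- The `d`-dimensional torus `(ℝ/2πℤ)^d`. -/
abbrev Torus (d : ℕ) : Type := Fin d → AddCircle (2 * Real.pi)

/-- Cosine as a function on the circle `ℝ/2πℤ`. -/
noncomputable def torusCos : AddCircle (2 * Real.pi) → ℝ := Real.cos_periodic.lift

/-- The one-particle dispersion `ε(p) = 2∑ᵢ (1 − cos pⁱ)` on the torus. -/
noncomputable def eps (d : ℕ) (p : Torus d) : ℝ := 2 * ∑ i, (1 - torusCos (p i))

/-- The normalized Haar measure `η` on the torus `T^d`. -/
noncomputable def η (d : ℕ) : Measure (Torus d) :=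
  Measure.pi fun _ => (AddCircle.haarAddCircle : Measure (AddCircle (2 * Real.pi)))

instance (d : ℕ) : IsProbabilityMeasure (η d) := by unfold η; infer_instance

/-- The two-particle fiber dispersion `𝓔ₖ(p) = ε(k−p) + ε(p)`. -/
noncomputable def calE (d : ℕ) (k p : Torus d) : ℝ := eps d (k - p) + eps d p

/-- `E_min(k) = min_{p ∈ T^d} 𝓔ₖ(p)`. -/
noncomputable def Emin (d : ℕ) (k : Torus d) : ℝ := sInf (Set.range (calE d k))

/-- `E_max(k) = max_{p ∈ T^d} 𝓔ₖ(p)`. -/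
noncomputable def Emax (d : ℕ) (k : Torus d) : ℝ := sSup (Set.range (calE d k))

/-- The three-particle dispersion `E(K;p,q) = ε(K−p−q) + ε(p) + ε(q)`. -/
noncomputable def EE (d : ℕ) (K p q : Torus d) : ℝ := eps d (K - p - q) + eps d p + eps d q

/-- `E_min(K) = min_{p,q ∈ T^d} E(K;p,q)`. -/
noncomputable def E3min (d : ℕ) (K : Torus d) : ℝ :=
  sInf (Set.range fun pq : Torus d × Torus d => EE d K pq.1 pq.2)

/-- `E_max(K) = max_{p,q ∈ T^d} E(K;p,q)`. -/
noncomputable def E3max (d : ℕ) (K : Torus d) : ℝ :=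
  sSup (Set.range fun pq : Torus d × Torus d => EE d K pq.1 pq.2)

/-- The two-particle determinant `Δ_μ(k;z) = 1 + μ ∫ (𝓔ₖ(q) − z)⁻¹ dη(q)`. -/
noncomputable def Delta2 (d : ℕ) (μ : ℝ) (k : Torus d) (z : ℝ) : ℝ :=
  1 + μ * ∫ q, (calE d k q - z)⁻¹ ∂(η d)

/-- The channel determinant `Δ_μ(K,p;z) = 1 + μ ∫ (E(K;p,q) − z)⁻¹ dη(q)`. -/
noncomputable def Delta3 (d : ℕ) (μ : ℝ) (K p : Torus d) (z : ℝ) : ℝ :=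
  1 + μ * ∫ q, (EE d K p q - z)⁻¹ ∂(η d)

/-- The point `π ∈ ℝ/2πℤ`. -/
noncomputable def piPt : AddCircle (2 * Real.pi) := ((Real.pi : ℝ) : AddCircle (2 * Real.pi))

instance (d : ℕ) : (η d).IsAddHaarMeasure := by unfold η; infer_instance
instance (d : ℕ) : (η d).IsNegInvariant :=
  Measure.IsAddHaarMeasure.isNegInvariant_of_regular (μ := η d)

lemma continuous_torusCos : Continuous torusCos := by
  apply (QuotientAddGroup.isQuotientMap_mk _).continuous_iff.mpr
  exact continuous_cos.congr fun x => (Real.cos_periodic.lift_coe x).symm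

lemma torusCos_mem (x : AddCircle (2 * Real.pi)) : -1 ≤ torusCos x ∧ torusCos x ≤ 1 := by
  obtain ⟨r, rfl⟩ := QuotientAddGroup.mk_surjective x
  rw [show torusCos ↑r = Real.cos r from Real.cos_periodic.lift_coe r]
  exact ⟨Real.neg_one_le_cos r, Real.cos_le_one r⟩

lemma eps_nonneg (d : ℕ) (p : Torus d) : 0 ≤ eps d p :=
  mul_nonneg (by norm_num) <| Finset.sum_nonneg fun i _ => by linarith [(torusCos_mem (p i)).2]

lemma eps_le (d : ℕ) (p : Torus d) : eps d p ≤ 4 * d := by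
  have : ∑ i, (1 - torusCos (p i)) ≤ ∑ _i : Fin d, (2:ℝ) :=
    Finset.sum_le_sum fun i _ => by linarith [(torusCos_mem (p i)).1]
  simp only [Finset.sum_const, Finset.card_univ, Fintype.card_fin, nsmul_eq_mul] at this
  unfold eps; linarith

lemma continuous_eps (d : ℕ) : Continuous (eps d) := by
  unfold eps
  exact continuous_const.mul <| continuous_finset_sum _ fun i _ =>
    continuous_const.sub (continuous_torusCos.comp (continuous_apply i))

lemma continuous_EE (d : ℕ) (K : Torus d) :
    Continuous (fun pq : Torus d × Torus d => EE d K pq.1 pq.2) := by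
  unfold EE
  have h1 : Continuous fun pq : Torus d × Torus d => K - pq.1 - pq.2 :=
    ((continuous_const.sub continuous_fst).sub continuous_snd)
  exact (((continuous_eps d).comp h1).add ((continuous_eps d).comp continuous_fst)).add
    ((continuous_eps d).comp continuous_snd)

lemma EE_le_E3max (d : ℕ) (K : Torus d) (p q : Torus d) : EE d K p q ≤ E3max d K :=
  le_csSup ⟨12 * d, by
    rintro x ⟨pq, rfl⟩
    have h1 := eps_le d (K - pq.1 - pq.2); have h2 := eps_le d pq.1; have h3 := eps_le d pq.2
    unfold EE; simp only []; linarith⟩ ⟨(p, q), rfl⟩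

lemma E3min_le_EE (d : ℕ) (K : Torus d) (p q : Torus d) : E3min d K ≤ EE d K p q :=
  csInf_le ⟨0, by
    rintro x ⟨pq, rfl⟩
    have h1 := eps_nonneg d (K - pq.1 - pq.2); have h2 := eps_nonneg d pq.1
    have h3 := eps_nonneg d pq.2
    unfold EE; simp only []; linarith⟩ ⟨(p, q), rfl⟩

lemma sq_integral_le {α : Type*} [MeasurableSpace α] {μ : Measure α} [IsProbabilityMeasure μ]
    {u : α → ℝ} (hu : Integrable u μ) (hu2 : Integrable (fun x => u x ^ 2) μ) :
    (∫ x, u x ∂μ) ^ 2 ≤ ∫ x, u x ^ 2 ∂μ := by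
  set c := ∫ x, u x ∂μ with hc
  have h0 : 0 ≤ ∫ x, (u x - c) ^ 2 ∂μ := integral_nonneg fun x => sq_nonneg _
  have hexp : ∀ x, (u x - c) ^ 2 = u x ^ 2 - (2 * c) * u x + c ^ 2 := fun x => by ring
  rw [show (fun x => (u x - c) ^ 2) = fun x => u x ^ 2 - (2 * c) * u x + c ^ 2 from funext hexp]
    at h0
  have hsub : Integrable (fun x => u x ^ 2 - 2 * c * u x) μ := hu2.sub (hu.const_mul (2 * c))
  rw [show (fun x => u x ^ 2 - 2 * c * u x + c ^ 2)
      = fun x => (u x ^ 2 - 2 * c * u x) + c ^ 2 from rfl,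
    integral_add hsub (integrable_const _),
    integral_sub hu2 (hu.const_mul (2 * c)), integral_const_mul, integral_const] at h0
  simp only [measure_univ, ENNReal.toReal_one, probReal_univ, ← hc, smul_eq_mul, one_mul] at h0
  nlinarith [h0]

lemma L2.mul_integrable {α : Type*} [MeasurableSpace α] {μ : Measure α} {u v : α → ℝ}
    (hu : MemLp u 2 μ) (hv : MemLp v 2 μ) : Integrable (fun x => u x * v x) μ := by
  have h2u := hu.integrable_sq
  have h2v := hv.integrable_sq
  refine Integrable.mono' (((h2u.add h2v).const_mul (1/2 : ℝ)))
    (hu.aestronglyMeasurable.mul hv.aestronglyMeasurable) (ae_of_all _ fun x => ?_)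
  rw [Real.norm_eq_abs, abs_mul]
  simp only [Pi.add_apply]
  nlinarith [sq_nonneg (|u x| - |v x|), abs_nonneg (u x), abs_nonneg (v x), sq_abs (u x),
    sq_abs (v x)]

lemma marginal_memL2 {α : Type*} [MeasurableSpace α] {μ : Measure α} [IsProbabilityMeasure μ]
    {F : α × α → ℝ} (hF : MemLp F 2 (μ.prod μ)) :
    MemLp (fun p => ∫ t, F (p, t) ∂μ) 2 μ := by
  have hFi : Integrable F (μ.prod μ) := hF.integrable one_le_two
  have hF2 : Integrable (fun x => F x ^ 2) (μ.prod μ) := hF.integrable_sq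
  set g := fun p => ∫ t, F (p, t) ∂μ with hg
  have hgm : AEStronglyMeasurable g μ := hF.aestronglyMeasurable.integral_prod_right'
  rw [memLp_two_iff_integrable_sq hgm]
  have hG : Integrable (fun p => ∫ t, F (p, t) ^ 2 ∂μ) μ := hF2.integral_prod_left
  refine hG.mono' (hgm.pow 2) ?_
  filter_upwards [hFi.prod_right_ae, hF2.prod_right_ae] with p h1 h2
  rw [Real.norm_eq_abs, abs_of_nonneg (sq_nonneg _)]
  exact sq_integral_le h1 h2

lemma mp_fst (d : ℕ) : MeasurePreserving Prod.fst ((η d).prod (η d)) (η d) :=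
  ⟨measurable_fst, by rw [Measure.map_fst_prod]; simp⟩

lemma mp_snd (d : ℕ) : MeasurePreserving Prod.snd ((η d).prod (η d)) (η d) :=
  ⟨measurable_snd, by rw [Measure.map_snd_prod]; simp⟩

lemma mp_tau (d : ℕ) (K : Torus d) :
    MeasurePreserving (fun pq : Torus d × Torus d => (K - pq.1 - pq.2, pq.2))
      ((η d).prod (η d)) ((η d).prod (η d)) := by
  have hσ : MeasurePreserving (fun r : Torus d × Torus d => (r.1, K - r.2 - r.1))
      ((η d).prod (η d)) ((η d).prod (η d)) := by
    apply (MeasurePreserving.id (η d)).skew_product (g := fun a b => K - b - a)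
    · exact (measurable_const.sub measurable_snd).sub measurable_fst
    · exact ae_of_all _ fun a =>
        ((measurePreserving_sub_right (η d) a).comp (Measure.measurePreserving_sub_left (η d) K)).map_eq
  have hcomp := (Measure.measurePreserving_swap (μ := η d) (ν := η d)).comp
    (hσ.comp (Measure.measurePreserving_swap (μ := η d) (ν := η d)))
  have heq : (Prod.swap ∘ ((fun r : Torus d × Torus d => (r.1, K - r.2 - r.1)) ∘ Prod.swap))
      = fun pq : Torus d × Torus d => (K - pq.1 - pq.2, pq.2) := rfl
  rwa [heq] at hcomp

def tauEquiv (d : ℕ) (K : Torus d) : (Torus d × Torus d) ≃ᵐ (Torus d × Torus d) where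
  toFun := fun pq => (K - pq.1 - pq.2, pq.2)
  invFun := fun pq => (K - pq.1 - pq.2, pq.2)
  left_inv := fun pq => by
    obtain ⟨p, q⟩ := pq
    simp only [Prod.mk.injEq]
    refine ⟨?_, trivial⟩
    abel
  right_inv := fun pq => by
    obtain ⟨p, q⟩ := pq
    simp only [Prod.mk.injEq]
    refine ⟨?_, trivial⟩
    abel
  measurable_toFun := (mp_tau d K).measurable
  measurable_invFun := (mp_tau d K).measurable

/-- main theorem, part (iii): for `μ < 0` the quadratic form of `H_μ(K)`
on symmetric functions is bounded above by `E_max(K)‖f‖²`, so `H_μ(K)` has no eigenvalue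
above `E_max(K)` with a symmetric eigenfunction; dually for `μ > 0` with `E_min(K)`. -/
theorem no_bound_state_on_wrong_side (d : ℕ) (hd : 1 ≤ d) (μ : ℝ) (K : Torus d)
    (H : Lp ℝ 2 ((η d).prod (η d)) →L[ℝ] Lp ℝ 2 ((η d).prod (η d)))
    (hact : ∀ f : Lp ℝ 2 ((η d).prod (η d)),
      ⇑(H f) =ᵐ[(η d).prod (η d)] fun pq =>
        EE d K pq.1 pq.2 * f pq +
          μ * ((∫ t, f (pq.1, t) ∂(η d)) + (∫ t, f (t, pq.2) ∂(η d)) +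
                (∫ t, f (t, K - pq.1 - pq.2) ∂(η d)))) :
    (μ < 0 →
      (∀ f : Lp ℝ 2 ((η d).prod (η d)),
        (∀ᵐ pq ∂((η d).prod (η d)),
          f pq = f (pq.2, pq.1) ∧ f pq = f (K - pq.1 - pq.2, pq.2)) →
        ⟪H f, f⟫ ≤ E3max d K * ‖f‖ ^ 2) ∧
      (∀ z : ℝ, E3max d K < z →
        ¬ ∃ f : Lp ℝ 2 ((η d).prod (η d)), f ≠ 0 ∧
          (∀ᵐ pq ∂((η d).prod (η d)),
            f pq = f (pq.2, pq.1) ∧ f pq = f (K - pq.1 - pq.2, pq.2)) ∧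
          H f = z • f)) ∧
    (0 < μ →
      (∀ f : Lp ℝ 2 ((η d).prod (η d)),
        (∀ᵐ pq ∂((η d).prod (η d)),
          f pq = f (pq.2, pq.1) ∧ f pq = f (K - pq.1 - pq.2, pq.2)) →
        E3min d K * ‖f‖ ^ 2 ≤ ⟪H f, f⟫) ∧
      (∀ z : ℝ, z < E3min d K →
        ¬ ∃ f : Lp ℝ 2 ((η d).prod (η d)), f ≠ 0 ∧
          (∀ᵐ pq ∂((η d).prod (η d)),
            f pq = f (pq.2, pq.1) ∧ f pq = f (K - pq.1 - pq.2, pq.2)) ∧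
          H f = z • f)) := by
  have key : ∀ f : Lp ℝ 2 ((η d).prod (η d)),
      (∀ᵐ pq ∂((η d).prod (η d)),
          f pq = f (pq.2, pq.1) ∧ f pq = f (K - pq.1 - pq.2, pq.2)) →
      ∃ J I : ℝ, 0 ≤ J ∧ ⟪H f, f⟫ = I + μ * (3 * J) ∧
        E3min d K * ‖f‖ ^ 2 ≤ I ∧ I ≤ E3max d K * ‖f‖ ^ 2 := by
    intro f hsym
    have hF2 : MemLp (⇑f) 2 ((η d).prod (η d)) := Lp.memLp f
    have hFi : Integrable (⇑f) ((η d).prod (η d)) := hF2.integrable one_le_two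
    have hFsq : Integrable (fun pq => f pq ^ 2) ((η d).prod (η d)) := hF2.integrable_sq
    have hg2 : MemLp (fun p => ∫ t, f (p, t) ∂(η d)) 2 (η d) := marginal_memL2 hF2
    have hh2 : MemLp (fun p => ∫ t, f (t, p) ∂(η d)) 2 (η d) :=
      marginal_memL2 (F := ⇑f ∘ Prod.swap)
        (hF2.comp_measurePreserving Measure.measurePreserving_swap)
    -- a.e. equality of the two marginals
    have geqh : (fun p => ∫ t, f (p, t) ∂(η d)) =ᵐ[η d] (fun p => ∫ t, f (t, p) ∂(η d)) := by
      have h1 : ∀ᵐ pq ∂((η d).prod (η d)), f pq = f (pq.2, pq.1) := by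
        filter_upwards [hsym] with pq h using h.1
      filter_upwards [Measure.ae_ae_of_ae_prod h1] with p hp using integral_congr_ae hp
    -- membership of the composed marginals
    have hgf : MemLp (fun pq : Torus d × Torus d => ∫ t, f (pq.1, t) ∂(η d)) 2
        ((η d).prod (η d)) := hg2.comp_measurePreserving (mp_fst d)
    have hhs : MemLp (fun pq : Torus d × Torus d => ∫ t, f (t, pq.2) ∂(η d)) 2
        ((η d).prod (η d)) := hh2.comp_measurePreserving (mp_snd d)
    have hhf : MemLp (fun pq : Torus d × Torus d => ∫ t, f (t, pq.1) ∂(η d)) 2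
        ((η d).prod (η d)) := hh2.comp_measurePreserving (mp_fst d)
    have hhc : MemLp (fun pq : Torus d × Torus d => ∫ t, f (t, K - pq.1 - pq.2) ∂(η d)) 2
        ((η d).prod (η d)) := hhf.comp_measurePreserving (mp_tau d K)
    -- integrability of the various products
    have iEE : Integrable (fun pq : Torus d × Torus d => EE d K pq.1 pq.2 * f pq ^ 2)
        ((η d).prod (η d)) := by
      refine hFsq.bdd_mul ((continuous_EE d K).aestronglyMeasurable) (c := 12 * d) (ae_of_all _ fun pq => ?_)
      have h0 : (0:ℝ) ≤ EE d K pq.1 pq.2 := by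
        have h1 := eps_nonneg d (K - pq.1 - pq.2); have h2 := eps_nonneg d pq.1
        have h3 := eps_nonneg d pq.2
        unfold EE; linarith
      rw [Real.norm_eq_abs, abs_of_nonneg h0]
      have h1 := eps_le d (K - pq.1 - pq.2); have h2 := eps_le d pq.1
      have h3 := eps_le d pq.2
      unfold EE; linarith
    have i2 : Integrable (fun pq : Torus d × Torus d => (∫ t, f (pq.1, t) ∂(η d)) * f pq)
        ((η d).prod (η d)) := L2.mul_integrable hgf hF2
    have i3 : Integrable (fun pq : Torus d × Torus d => (∫ t, f (t, pq.2) ∂(η d)) * f pq)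
        ((η d).prod (η d)) := L2.mul_integrable hhs hF2
    have i4 : Integrable (fun pq : Torus d × Torus d =>
        (∫ t, f (t, K - pq.1 - pq.2) ∂(η d)) * f pq) ((η d).prod (η d)) :=
      L2.mul_integrable hhc hF2
    have iphi : Integrable (fun pq : Torus d × Torus d => (∫ t, f (t, pq.1) ∂(η d)) * f pq)
        ((η d).prod (η d)) := L2.mul_integrable hhf hF2
    -- the quadratic form as an integral
    have hinner : ⟪H f, f⟫ = ∫ pq, (EE d K pq.1 pq.2 * f pq +
        μ * ((∫ t, f (pq.1, t) ∂(η d)) + (∫ t, f (t, pq.2) ∂(η d)) +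
          (∫ t, f (t, K - pq.1 - pq.2) ∂(η d)))) * f pq ∂((η d).prod (η d)) := by
      rw [L2.inner_def]
      refine integral_congr_ae ?_
      filter_upwards [hact f] with pq hpq
      rw [hpq]
      simp [RCLike.inner_apply, conj_trivial]
      ring
    -- splitting
    have hsplit : (fun pq : Torus d × Torus d => (EE d K pq.1 pq.2 * f pq +
        μ * ((∫ t, f (pq.1, t) ∂(η d)) + (∫ t, f (t, pq.2) ∂(η d)) +
          (∫ t, f (t, K - pq.1 - pq.2) ∂(η d)))) * f pq)
        = fun pq : Torus d × Torus d => EE d K pq.1 pq.2 * f pq ^ 2 +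
          (μ * ((∫ t, f (pq.1, t) ∂(η d)) * f pq) +
            (μ * ((∫ t, f (t, pq.2) ∂(η d)) * f pq) +
              μ * ((∫ t, f (t, K - pq.1 - pq.2) ∂(η d)) * f pq))) := by
      funext pq; ring
    have hIsum : ∫ pq, (EE d K pq.1 pq.2 * f pq +
        μ * ((∫ t, f (pq.1, t) ∂(η d)) + (∫ t, f (t, pq.2) ∂(η d)) +
          (∫ t, f (t, K - pq.1 - pq.2) ∂(η d)))) * f pq ∂((η d).prod (η d))
        = (∫ pq, EE d K pq.1 pq.2 * f pq ^ 2 ∂((η d).prod (η d))) +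
          (μ * (∫ pq, (∫ t, f (pq.1, t) ∂(η d)) * f pq ∂((η d).prod (η d))) +
            (μ * (∫ pq, (∫ t, f (t, pq.2) ∂(η d)) * f pq ∂((η d).prod (η d))) +
              μ * (∫ pq, (∫ t, f (t, K - pq.1 - pq.2) ∂(η d)) * f pq ∂((η d).prod (η d))))) := by
      have j2 : Integrable (fun pq : Torus d × Torus d =>
          μ * ((∫ t, f (pq.1, t) ∂(η d)) * f pq)) ((η d).prod (η d)) := i2.const_mul μ
      have j3 : Integrable (fun pq : Torus d × Torus d =>
          μ * ((∫ t, f (t, pq.2) ∂(η d)) * f pq)) ((η d).prod (η d)) := i3.const_mul μ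
      have j4 : Integrable (fun pq : Torus d × Torus d =>
          μ * ((∫ t, f (t, K - pq.1 - pq.2) ∂(η d)) * f pq)) ((η d).prod (η d)) := i4.const_mul μ
      have j34 : Integrable (fun pq : Torus d × Torus d =>
          μ * ((∫ t, f (t, pq.2) ∂(η d)) * f pq) +
            μ * ((∫ t, f (t, K - pq.1 - pq.2) ∂(η d)) * f pq)) ((η d).prod (η d)) := j3.add j4
      have j234 : Integrable (fun pq : Torus d × Torus d =>
          μ * ((∫ t, f (pq.1, t) ∂(η d)) * f pq) +
            (μ * ((∫ t, f (t, pq.2) ∂(η d)) * f pq) +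
              μ * ((∫ t, f (t, K - pq.1 - pq.2) ∂(η d)) * f pq))) ((η d).prod (η d)) :=
        j2.add j34
      rw [hsplit, integral_add iEE j234, integral_add j2 j34, integral_add j3 j4,
        integral_const_mul, integral_const_mul, integral_const_mul]
    -- evaluation of the three cross terms
    have e2 : ∫ pq, (∫ t, f (pq.1, t) ∂(η d)) * f pq ∂((η d).prod (η d))
        = ∫ p, (∫ t, f (p, t) ∂(η d)) ^ 2 ∂(η d) := by
      rw [integral_prod _ i2]
      refine integral_congr_ae (ae_of_all _ fun p => ?_)
      show (∫ q, (∫ t, f (p, t) ∂(η d)) * f (p, q) ∂(η d)) = (∫ t, f (p, t) ∂(η d)) ^ 2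
      rw [integral_const_mul, pow_two]
    have e3 : ∫ pq, (∫ t, f (t, pq.2) ∂(η d)) * f pq ∂((η d).prod (η d))
        = ∫ p, (∫ t, f (p, t) ∂(η d)) ^ 2 ∂(η d) := by
      rw [integral_prod_symm _ i3]
      trans (∫ q, (∫ t, f (t, q) ∂(η d)) ^ 2 ∂(η d))
      · refine integral_congr_ae (ae_of_all _ fun q => ?_)
        show (∫ p, (∫ t, f (t, q) ∂(η d)) * f (p, q) ∂(η d)) = (∫ t, f (t, q) ∂(η d)) ^ 2
        rw [integral_const_mul, pow_two]
      · refine integral_congr_ae ?_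
        filter_upwards [geqh] with p hp
        rw [← hp]
    have e4 : ∫ pq, (∫ t, f (t, K - pq.1 - pq.2) ∂(η d)) * f pq ∂((η d).prod (η d))
        = ∫ p, (∫ t, f (p, t) ∂(η d)) ^ 2 ∂(η d) := by
      have hs2 : ∀ᵐ pq ∂((η d).prod (η d)), f pq = f (K - pq.1 - pq.2, pq.2) := by
        filter_upwards [hsym] with pq h using h.2
      have e4a : (fun pq : Torus d × Torus d =>
            (∫ t, f (t, K - pq.1 - pq.2) ∂(η d)) * f pq) =ᵐ[(η d).prod (η d)]
          (fun pq => (∫ t, f (t, K - pq.1 - pq.2) ∂(η d)) * f (K - pq.1 - pq.2, pq.2)) := by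
        filter_upwards [hs2] with pq h
        rw [← h]
      rw [integral_congr_ae e4a]
      have e4b := (mp_tau d K).integral_comp' (f := tauEquiv d K)
        (fun pq : Torus d × Torus d => (∫ t, f (t, pq.1) ∂(η d)) * f pq)
      rw [show (∫ pq, (∫ t, f (t, K - pq.1 - pq.2) ∂(η d)) * f (K - pq.1 - pq.2, pq.2)
            ∂((η d).prod (η d)))
          = ∫ pq, (∫ t, f (t, (tauEquiv d K pq).1) ∂(η d)) * f (tauEquiv d K pq)
            ∂((η d).prod (η d)) from rfl, e4b]
      rw [integral_prod _ iphi]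
      trans (∫ p, (∫ t, f (t, p) ∂(η d)) * (∫ t, f (p, t) ∂(η d)) ∂(η d))
      · refine integral_congr_ae (ae_of_all _ fun p => ?_)
        show (∫ q, (∫ t, f (t, p) ∂(η d)) * f (p, q) ∂(η d))
          = (∫ t, f (t, p) ∂(η d)) * (∫ t, f (p, t) ∂(η d))
        rw [integral_const_mul]
      · refine integral_congr_ae ?_
        filter_upwards [geqh] with p hp
        rw [← hp, pow_two]
    -- the norm as an integral
    have hnorm : ∫ pq, f pq ^ 2 ∂((η d).prod (η d)) = ‖f‖ ^ 2 := by
      rw [← real_inner_self_eq_norm_sq f, L2.inner_def]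
      refine integral_congr_ae (ae_of_all _ fun pq => ?_)
      simp [RCLike.inner_apply, conj_trivial, pow_two]
    refine ⟨∫ p, (∫ t, f (p, t) ∂(η d)) ^ 2 ∂(η d),
      ∫ pq, EE d K pq.1 pq.2 * f pq ^ 2 ∂((η d).prod (η d)),
      integral_nonneg fun p => sq_nonneg _, ?_, ?_, ?_⟩
    · rw [hinner, hIsum, e2, e3, e4]; ring
    · have h1 : ∫ pq, E3min d K * f pq ^ 2 ∂((η d).prod (η d))
          ≤ ∫ pq, EE d K pq.1 pq.2 * f pq ^ 2 ∂((η d).prod (η d)) :=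
        integral_mono (hFsq.const_mul _) iEE fun pq =>
          mul_le_mul_of_nonneg_right (E3min_le_EE d K _ _) (sq_nonneg _)
      rwa [integral_const_mul, hnorm] at h1
    · have h1 : ∫ pq, EE d K pq.1 pq.2 * f pq ^ 2 ∂((η d).prod (η d))
          ≤ ∫ pq, E3max d K * f pq ^ 2 ∂((η d).prod (η d)) :=
        integral_mono iEE (hFsq.const_mul _) fun pq =>
          mul_le_mul_of_nonneg_right (EE_le_E3max d K _ _) (sq_nonneg _)
      rwa [integral_const_mul, hnorm] at h1
  have upper : μ < 0 → ∀ f : Lp ℝ 2 ((η d).prod (η d)),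
      (∀ᵐ pq ∂((η d).prod (η d)),
        f pq = f (pq.2, pq.1) ∧ f pq = f (K - pq.1 - pq.2, pq.2)) →
      ⟪H f, f⟫ ≤ E3max d K * ‖f‖ ^ 2 := by
    intro hμ f hsym
    obtain ⟨J, I, hJ, hEq, _, hup⟩ := key f hsym
    nlinarith
  have lower : 0 < μ → ∀ f : Lp ℝ 2 ((η d).prod (η d)),
      (∀ᵐ pq ∂((η d).prod (η d)),
        f pq = f (pq.2, pq.1) ∧ f pq = f (K - pq.1 - pq.2, pq.2)) →
      E3min d K * ‖f‖ ^ 2 ≤ ⟪H f, f⟫ := by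
    intro hμ f hsym
    obtain ⟨J, I, hJ, hEq, hlow, _⟩ := key f hsym
    nlinarith
  refine ⟨fun hμ => ⟨upper hμ, ?_⟩, fun hμ => ⟨lower hμ, ?_⟩⟩
  · rintro z hz ⟨f, hf0, hsymf, heig⟩
    have hq := upper hμ f hsymf
    have hzz : ⟪H f, f⟫ = z * ‖f‖ ^ 2 := by
      rw [heig, real_inner_smul_left, real_inner_self_eq_norm_sq]
    have hn : 0 < ‖f‖ ^ 2 := pow_pos (norm_pos_iff.mpr hf0) 2
    nlinarith
  · rintro z hz ⟨f, hf0, hsymf, heig⟩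
    have hq := lower hμ f hsymf
    have hzz : ⟪H f, f⟫ = z * ‖f‖ ^ 2 := by
      rw [heig, real_inner_smul_left, real_inner_self_eq_norm_sq]
    have hn : 0 < ‖f‖ ^ 2 := pow_pos (norm_pos_iff.mpr hf0) 2
    nlinarith
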